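/- Let r ≥ 2 and d ≥ 1 be integers, and let K be a finite geometric simplicial complex. If there exists a continuous map f : |K| → ℝ^d with no r-Tverberg point, then there exists an S_r-equivariant continuous map F : K^r_Δ → S^{d(r−1)−1}. -/

import Mathlib

open Set

noncomputable section

/-- `s` is a face of `K` containing `x` in its relative interior; i.e. `s` is the
support of `x` in `K`. -/
def IsSupportFace {n : ℕ} (K : Geometry.SimplicialComplex ℝ (EuclideanSpace ℝ (Fin n)))
    (x : EuclideanSpace ℝ (Fin n)) (s : Finset (EuclideanSpace ℝ (Fin n))) : Prop :=
  s ∈ K.faces ∧ x ∈ intrinsicInterior ℝ (convexHull ℝ (↑s : Set (EuclideanSpace ℝ (Fin n))))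

/-- The continuous map `f : |K| → ℝ^d` has an `r`-Tverberg point: there are `r` points of
`|K|` with pairwise (vertex-)disjoint supports mapped to the same point. -/
def HasTverbergPoint {n d : ℕ} (K : Geometry.SimplicialComplex ℝ (EuclideanSpace ℝ (Fin n)))
    (r : ℕ) (f : EuclideanSpace ℝ (Fin n) → EuclideanSpace ℝ (Fin d)) : Prop :=
  ∃ (x : Fin r → EuclideanSpace ℝ (Fin n)) (s : Fin r → Finset (EuclideanSpace ℝ (Fin n))),
    (∀ i, IsSupportFace K (x i) (s i)) ∧
    (Pairwise fun i j => Disjoint (s i) (s j)) ∧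
    (∀ i j, f (x i) = f (x j))

/-- The `r`-fold deleted product `K^r_Δ` of `K`, as a subspace of `((ℝ^n))^r`. -/
def deletedProduct {n : ℕ} (K : Geometry.SimplicialComplex ℝ (EuclideanSpace ℝ (Fin n)))
    (r : ℕ) : Set (Fin r → EuclideanSpace ℝ (Fin n)) :=
  {x | ∃ s : Fin r → Finset (EuclideanSpace ℝ (Fin n)),
    (∀ i, IsSupportFace K (x i) (s i)) ∧ Pairwise fun i j => Disjoint (s i) (s j)}

/-- The sphere `S^{d(r-1)-1} = {(y_1,…,y_r) ∈ (ℝ^d)^r : Σ y_i = 0, Σ ‖y_i‖² = 1}`. -/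
def tvSphere (d r : ℕ) : Set (Fin r → EuclideanSpace ℝ (Fin d)) :=
  {y | (∑ i, y i) = 0 ∧ (∑ i, ‖y i‖ ^ 2) = 1}

/-- There exists an `S_r`-equivariant continuous map `K^r_Δ → S^{d(r-1)-1}`. -/
def ExistsEquivariantMap {n : ℕ} (K : Geometry.SimplicialComplex ℝ (EuclideanSpace ℝ (Fin n)))
    (r d : ℕ) : Prop :=
  ∃ F : (Fin r → EuclideanSpace ℝ (Fin n)) → (Fin r → EuclideanSpace ℝ (Fin d)),
    ContinuousOn F (deletedProduct K r) ∧
    MapsTo F (deletedProduct K r) (tvSphere d r) ∧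
    ∀ x ∈ deletedProduct K r, ∀ π : Equiv.Perm (Fin r),
      F (fun i => x (π i)) = fun i => F x (π i)

/-- necessity of the deleted product criterion: if a finite geometric
simplicial complex `K` admits a continuous map `|K| → ℝ^d` with no `r`-Tverberg point, then
there is an `S_r`-equivariant continuous map `K^r_Δ → S^{d(r-1)-1}`. -/
theorem statement0 (n d r : ℕ) (hr : 2 ≤ r) (hd : 1 ≤ d)
    (K : Geometry.SimplicialComplex ℝ (EuclideanSpace ℝ (Fin n)))
    (hK : K.faces.Finite)
    (f : EuclideanSpace ℝ (Fin n) → EuclideanSpace ℝ (Fin d))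
    (hf : ContinuousOn f K.space)
    (hT : ¬ HasTverbergPoint K r f) :
    ExistsEquivariantMap K r d := by
  have hr0 : (r : ℝ) ≠ 0 := by positivity
  set D := deletedProduct K r with hD
  -- membership of coordinates in K.space
  have hmem : ∀ x ∈ D, ∀ i, x i ∈ K.space := by
    rintro x ⟨s, hs, -⟩ i
    exact (Geometry.SimplicialComplex.convexHull_subset_space (hs i).1)
      (intrinsicInterior_subset (hs i).2)
  set g : (Fin r → EuclideanSpace ℝ (Fin n)) → Fin r → EuclideanSpace ℝ (Fin d) :=
    fun x i => f (x i) - (r : ℝ)⁻¹ • ∑ k, f (x k) with hg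
  set S : (Fin r → EuclideanSpace ℝ (Fin n)) → ℝ := fun x => ∑ i, ‖g x i‖ ^ 2 with hS
  have hSpos : ∀ x ∈ D, 0 < S x := by
    intro x hx
    rcases lt_or_eq_of_le (Finset.sum_nonneg fun i _ => by positivity : 0 ≤ S x) with h | h
    · exact h
    exfalso
    have hzero : ∀ i, g x i = 0 := by
      intro i
      have := (Finset.sum_eq_zero_iff_of_nonneg (fun i _ => by positivity :
        ∀ i ∈ Finset.univ, 0 ≤ ‖g x i‖ ^ 2)).mp h.symm i (Finset.mem_univ i)
      have : ‖g x i‖ = 0 := by nlinarith [norm_nonneg (g x i)]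
      simpa using this
    have heq : ∀ i, f (x i) = (r : ℝ)⁻¹ • ∑ k, f (x k) := by
      intro i; have := hzero i; rw [hg] at this; simpa [sub_eq_zero] using this
    rcases hx with ⟨s, hs, hdisj⟩
    exact hT ⟨x, s, hs, hdisj, fun i j => by rw [heq i, heq j]⟩
  have hsum : ∀ x, ∑ i, g x i = 0 := by
    intro x
    simp only [hg, Finset.sum_sub_distrib, Finset.sum_const, Finset.card_univ,
      Fintype.card_fin, sub_eq_zero]
    rw [← Nat.cast_smul_eq_nsmul ℝ, smul_smul]
    simp [hr0]
  refine ⟨fun x i => (Real.sqrt (S x))⁻¹ • g x i, ?_, ?_, ?_⟩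
  · -- continuity
    have hfc : ∀ i, ContinuousOn (fun x : Fin r → EuclideanSpace ℝ (Fin n) => f (x i)) D :=
      fun i => hf.comp (continuous_apply i).continuousOn fun x hx => hmem x hx i
    have hgc : ∀ i, ContinuousOn (fun x => g x i) D := by
      intro i
      exact (hfc i).sub ((continuous_const_smul ((r : ℝ)⁻¹)).comp_continuousOn (continuousOn_finset_sum Finset.univ fun k _ => hfc k))
    have hScont : ContinuousOn S D := continuousOn_finset_sum Finset.univ fun i _ => by
      exact (continuous_pow 2).comp_continuousOn (hgc i).norm
    have hinv : ContinuousOn (fun x => (Real.sqrt (S x))⁻¹) D := by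
      apply ContinuousOn.inv₀
      · exact Real.continuous_sqrt.comp_continuousOn hScont
      · intro x hx
        exact ne_of_gt (Real.sqrt_pos.mpr (hSpos x hx))
    exact continuousOn_pi.mpr fun i => hinv.smul (hgc i)
  · -- maps to sphere
    intro x hx
    have hSx := hSpos x hx
    have hsq : Real.sqrt (S x) ^ 2 = S x := Real.sq_sqrt hSx.le
    have hsqrt : Real.sqrt (S x) ≠ 0 := ne_of_gt (Real.sqrt_pos.mpr hSx)
    constructor
    · rw [← Finset.smul_sum, hsum, smul_zero]
    · have : ∀ i, ‖(Real.sqrt (S x))⁻¹ • g x i‖ ^ 2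
          = (Real.sqrt (S x))⁻¹ ^ 2 * ‖g x i‖ ^ 2 := by
        intro i
        rw [norm_smul, mul_pow]
        congr 1
        rw [Real.norm_eq_abs, sq_abs]
      simp only [this]
      rw [← Finset.mul_sum]
      have h2 : ∑ i, ‖g x i‖ ^ 2 = S x := rfl
      rw [h2, inv_pow, hsq, inv_mul_cancel₀ (ne_of_gt hSx)]
  · -- equivariance
    intro x hx π
    have hgp : ∀ i, g (fun j => x (π j)) i = g x (π i) := by
      intro i
      simp only [hg]
      congr 2
      exact Equiv.sum_comp π fun k => f (x k)
    have hSp : S (fun j => x (π j)) = S x := by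
      simp only [hS, hgp]
      exact Equiv.sum_comp π fun i => ‖g x i‖ ^ 2
    funext i
    show (Real.sqrt (S fun j => x (π j)))⁻¹ • g (fun j => x (π j)) i
        = (Real.sqrt (S x))⁻¹ • g x (π i)
    rw [hgp, hSp]
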